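/- There exists a ∈ {0,1,...,6n−4} such that the code {x ∈ F_2^n : Σ_{i=1}^{n-1} i·x_i + (2n−1)·x_n ≡ a (mod 6n−3)} has at least 2^n/(6n−3) codewords; consequently there exists a code of length n correcting a single deletion or single adjacent transposition with redundancy at most log(6n−3) bits. -/

import Mathlib

/-- The syndrome Σ_{i=1}^{n-1} i·x_i + (2n−1)·x_n of the code X_D(n,a). -/
def sD {n : ℕ} (x : Fin n → ZMod 2) : ℤ :=
  ∑ i : Fin n, (if i.val = n - 1 then (2 * (n : ℤ) - 1) else ((i : ℕ) + 1 : ℤ)) *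
    ((x i).val : ℤ)

theorem exists_large_XD_code {n : ℕ} (hn : 1 ≤ n) :
    ∃ a : ℕ, a ≤ 6 * n - 4 ∧
      (2 : ℝ) ^ n / (6 * (n : ℝ) - 3) ≤
        ((Finset.univ.filter
          (fun x : Fin n → ZMod 2 => sD x % (6 * (n : ℤ) - 3) = (a : ℤ))).card : ℝ) ∧
      (n : ℝ) - Real.logb 2
          ((Finset.univ.filter
            (fun x : Fin n → ZMod 2 => sD x % (6 * (n : ℤ) - 3) = (a : ℤ))).card : ℝ)
        ≤ Real.logb 2 (6 * (n : ℝ) - 3) := by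
  set M : ℕ := 6 * n - 3 with hM
  have hMpos : 0 < M := by omega
  have hMcast : ((M : ℤ)) = 6 * (n : ℤ) - 3 := by
    have : 3 ≤ 6 * n := by omega
    push_cast [hM]
    omega
  have hMZne : (M : ℤ) ≠ 0 := by exact_mod_cast hMpos.ne'
  set f : (Fin n → ZMod 2) → ℕ := fun x => (sD x % (M : ℤ)).toNat with hf
  have hmem : ∀ x : Fin n → ZMod 2, f x ∈ Finset.range M := by
    intro x
    have h1 : 0 ≤ sD x % (M : ℤ) := Int.emod_nonneg _ hMZne
    have h2 : sD x % (M : ℤ) < M := Int.emod_lt_of_pos _ (by exact_mod_cast hMpos)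
    simp only [hf, Finset.mem_range]
    omega
  have hcard : ∑ a ∈ Finset.range M,
      (Finset.univ.filter (fun x : Fin n → ZMod 2 => f x = a)).card = 2 ^ n := by
    rw [← Finset.card_eq_sum_card_fiberwise (fun x _ => hmem x)]
    rw [Finset.card_univ]; simp
  have hne : (Finset.range M).Nonempty := ⟨0, Finset.mem_range.mpr hMpos⟩
  have hsum : ∑ _a ∈ Finset.range M, ((2 : ℝ) ^ n / M) ≤ ∑ a ∈ Finset.range M,
      ((Finset.univ.filter (fun x : Fin n → ZMod 2 => f x = a)).card : ℝ) := by
    rw [Finset.sum_const, Finset.card_range, nsmul_eq_mul,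
      mul_div_cancel₀ _ (by exact_mod_cast hMpos.ne' : (M : ℝ) ≠ 0)]
    rw [← Nat.cast_sum, hcard]
    push_cast
    rfl
  obtain ⟨a, haM, hle⟩ := Finset.exists_le_of_sum_le hne hsum
  rw [Finset.mem_range] at haM
  have hfeq : (Finset.univ.filter
      (fun x : Fin n → ZMod 2 => sD x % (6 * (n : ℤ) - 3) = (a : ℤ)))
      = Finset.univ.filter (fun x : Fin n → ZMod 2 => f x = a) := by
    apply Finset.filter_congr
    intro x _
    have h1 : 0 ≤ sD x % (M : ℤ) := Int.emod_nonneg _ hMZne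
    rw [← hMcast]
    simp only [hf]
    omega
  have hMR : ((M : ℝ)) = 6 * (n : ℝ) - 3 := by exact_mod_cast hMcast
  have hfirst : (2 : ℝ) ^ n / (6 * (n : ℝ) - 3) ≤
      ((Finset.univ.filter
        (fun x : Fin n → ZMod 2 => sD x % (6 * (n : ℤ) - 3) = (a : ℤ))).card : ℝ) := by
    rw [hfeq, ← hMR]; exact hle
  refine ⟨a, by omega, hfirst, ?_⟩
  set c : ℝ := ((Finset.univ.filter
    (fun x : Fin n → ZMod 2 => sD x % (6 * (n : ℤ) - 3) = (a : ℤ))).card : ℝ)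
  have hMRpos : (0 : ℝ) < 6 * (n : ℝ) - 3 := by
    rw [← hMR]; exact_mod_cast hMpos
  have hq : (0 : ℝ) < (2 : ℝ) ^ n / (6 * (n : ℝ) - 3) :=
    div_pos (by positivity) hMRpos
  have hcpos : (0 : ℝ) < c := lt_of_lt_of_le hq hfirst
  have hlog : Real.logb 2 ((2 : ℝ) ^ n / (6 * (n : ℝ) - 3)) ≤ Real.logb 2 c :=
    Real.logb_le_logb_of_le (by norm_num) hq hfirst
  rw [Real.logb_div (by positivity) hMRpos.ne', Real.logb_pow, Real.logb_self_eq_one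
    (by norm_num), mul_one] at hlog
  linarith
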